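/- Let Γ be an even Artin graph with Artin group G, A ⊆ V, g ∈ G. Suppose G_A ∪ gG_Ag^{-1} is not contained in any proper parabolic subgroup of G, and there exists x ∈ V \ A with A ⊄ lk(x). Then G_A ∩ gG_Ag^{-1} is contained in a parabolic subgroup conjugate to G_B for some proper subset B ⊊ A. -/

import Mathlib

/-- An Artin graph: a simplicial graph with even/arbitrary labels; `m u v = 0`
means `u` and `v` are not joined by an edge, otherwise `m u v ≥ 2` is the label. -/
structure ArtinGraph (V : Type) where
  m : V → V → ℕ
  symm : ∀ u v, m u v = m v u
  loopless : ∀ v, m v v = 0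
  ne_one : ∀ u v, m u v ≠ 1

namespace ArtinGraph

variable {V : Type}

/-- `word u v n` is the prefix of length `n` of the alternating word `uvuv…`. -/
def word : V → V → ℕ → FreeGroup V
  | _, _, 0 => 1
  | u, v, n + 1 => FreeGroup.of u * word v u n

/-- The Artin relations of the graph. -/
def rels (Γ : ArtinGraph V) : Set (FreeGroup V) :=
  {r | ∃ u v, Γ.m u v ≠ 0 ∧ r = word u v (Γ.m u v) * (word v u (Γ.m u v))⁻¹}

/-- The Artin group of an Artin graph. -/
def ArtinGroup (Γ : ArtinGraph V) : Type := PresentedGroup Γ.rels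

instance (Γ : ArtinGraph V) : Group Γ.ArtinGroup :=
  inferInstanceAs (Group (PresentedGroup Γ.rels))

/-- The generator of the Artin group corresponding to a vertex. -/
def gen (Γ : ArtinGraph V) (v : V) : Γ.ArtinGroup := PresentedGroup.of v

/-- The standard parabolic subgroup on a set `S` of vertices. -/
def std (Γ : ArtinGraph V) (S : Set V) : Subgroup Γ.ArtinGroup :=
  Subgroup.closure (Γ.gen '' S)

/-- The conjugate `g H g⁻¹` of a subgroup. -/
def conjP {G : Type*} [Group G] (g : G) (H : Subgroup G) : Subgroup G :=
  H.map (MulAut.conj g).toMonoidHom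

/-- A parabolic subgroup is a conjugate of a standard parabolic subgroup. -/
def IsParabolic (Γ : ArtinGraph V) (P : Subgroup Γ.ArtinGroup) : Prop :=
  ∃ (S : Set V) (g : Γ.ArtinGroup), P = conjP g (Γ.std S)

/-- An Artin graph is even if all labels are even. -/
def IsEven (Γ : ArtinGraph V) : Prop := ∀ u v, Even (Γ.m u v)

/-- The FC condition for even Artin graphs: in every triangle at least two of
the three labels are equal to `2`. -/
def IsFC (Γ : ArtinGraph V) : Prop :=
  ∀ u v w, Γ.m u v ≠ 0 → Γ.m v w ≠ 0 → Γ.m w u ≠ 0 →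
    (Γ.m u v = 2 ∧ Γ.m v w = 2) ∨ (Γ.m v w = 2 ∧ Γ.m w u = 2) ∨
      (Γ.m u v = 2 ∧ Γ.m w u = 2)

/-- The link of a vertex. -/
def lk (Γ : ArtinGraph V) (x : V) : Set V := {u | Γ.m x u ≠ 0}

/-- The star of a vertex. -/
def star (Γ : ArtinGraph V) (x : V) : Set V := insert x (Γ.lk x)

end ArtinGraph



namespace ArtinGraph

variable {V : Type}

/-- Alternating product in a monoid. -/
def gword {M : Type*} [Monoid M] : M → M → ℕ → M
  | _, _, 0 => 1
  | a, b, n + 1 => a * gword b a n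

theorem map_word {M : Type*} [Monoid M] (F : FreeGroup V →* M) (u v : V) (n : ℕ) :
    F (word u v n) = gword (F (FreeGroup.of u)) (F (FreeGroup.of v)) n := by
  induction n generalizing u v with
  | zero => simp [word, gword]
  | succ n ih => simp [word, gword, map_mul, ih]

theorem gword_even {M : Type*} [Monoid M] (a b : M) (k : ℕ) :
    gword a b (2 * k) = (a * b) ^ k := by
  induction k generalizing a b with
  | zero => simp [gword]
  | succ k ih =>
    have : 2 * (k + 1) = (2 * k) + 1 + 1 := by ring
    rw [this]
    show a * gword b a (2 * k + 1) = _
    show a * (b * gword a b (2 * k)) = _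
    rw [ih, ← mul_assoc, ← pow_succ']

theorem gen_rel (Γ : ArtinGraph V) {u v : V} (h : Γ.m u v ≠ 0) :
    gword (Γ.gen u) (Γ.gen v) (Γ.m u v) = gword (Γ.gen v) (Γ.gen u) (Γ.m u v) := by
  have hr : Γ.m u v ≠ 0 ∧ (word u v (Γ.m u v) * (word v u (Γ.m u v))⁻¹ : FreeGroup V)
      = word u v (Γ.m u v) * (word v u (Γ.m u v))⁻¹ := ⟨h, rfl⟩
  have hmem : (word u v (Γ.m u v) * (word v u (Γ.m u v))⁻¹ : FreeGroup V) ∈ Γ.rels :=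
    ⟨u, v, h, rfl⟩
  have h1 : PresentedGroup.mk Γ.rels (word u v (Γ.m u v) * (word v u (Γ.m u v))⁻¹) = 1 :=
    (QuotientGroup.eq_one_iff _).mpr (Subgroup.subset_normalClosure hmem)
  rw [map_mul, map_inv, mul_inv_eq_one] at h1
  have h2 := map_word (PresentedGroup.mk Γ.rels) u v (Γ.m u v)
  have h3 := map_word (PresentedGroup.mk Γ.rels) v u (Γ.m u v)
  rw [h2, h3] at h1
  exact h1

theorem gen_mem_std (Γ : ArtinGraph V) {S : Set V} {v : V} (hv : v ∈ S) :
    Γ.gen v ∈ Γ.std S :=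
  Subgroup.subset_closure ⟨v, hv, rfl⟩

open scoped Classical in
/-- The retraction-style endomorphism killing generators outside `S` (needs evenness). -/
noncomputable def retr (Γ : ArtinGraph V) (hEven : Γ.IsEven) (S : Set V) :
    Γ.ArtinGroup →* Γ.ArtinGroup := by
  refine PresentedGroup.toGroup (f := fun v => if v ∈ S then Γ.gen v else 1) ?_
  rintro r ⟨u, v, hm, rfl⟩
  obtain ⟨k, hk⟩ := hEven u v
  rw [map_mul, map_inv, mul_inv_eq_one, map_word, map_word]
  have hk2 : Γ.m u v = 2 * k := by omega
  simp only [FreeGroup.lift_apply_of]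
  rw [hk2, gword_even, gword_even]
  by_cases hu : u ∈ S <;> by_cases hv : v ∈ S <;> simp [hu, hv]
  · -- both in S : use the relation
    have := Γ.gen_rel hm
    rw [hk2, gword_even, gword_even] at this
    exact this

open scoped Classical in
theorem retr_gen (Γ : ArtinGraph V) (hEven : Γ.IsEven) (S : Set V) (v : V) :
    Γ.retr hEven S (Γ.gen v) = if v ∈ S then Γ.gen v else 1 :=
  PresentedGroup.toGroup.of _

theorem retr_fix (Γ : ArtinGraph V) (hEven : Γ.IsEven) (S : Set V) {z : Γ.ArtinGroup}
    (hz : z ∈ Γ.std S) : Γ.retr hEven S z = z := by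
  induction hz using Subgroup.closure_induction with
  | mem g hg =>
    obtain ⟨v, hv, rfl⟩ := hg
    rw [retr_gen, if_pos hv]
  | one => simp
  | mul a b _ _ ha hb => rw [map_mul, ha, hb]
  | inv a _ ha => rw [map_inv, ha]

theorem retr_std_le (Γ : ArtinGraph V) (hEven : Γ.IsEven) (S T : Set V) {z : Γ.ArtinGroup}
    (hz : z ∈ Γ.std T) : Γ.retr hEven S z ∈ Γ.std (S ∩ T) := by
  induction hz using Subgroup.closure_induction with
  | mem g hg =>
    obtain ⟨v, hv, rfl⟩ := hg
    rw [retr_gen]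
    by_cases hvS : v ∈ S
    · rw [if_pos hvS]
      exact Γ.gen_mem_std ⟨hvS, hv⟩
    · rw [if_neg hvS]
      exact one_mem _
  | one => simp only [map_one]; exact one_mem _
  | mul a b _ _ ha hb => rw [map_mul]; exact mul_mem ha hb
  | inv a _ ha => rw [map_inv]; exact inv_mem ha

theorem map_gword {M N : Type*} [Monoid M] [Monoid N] (F : M →* N) (a b : M) (n : ℕ) :
    F (gword a b n) = gword (F a) (F b) n := by
  induction n generalizing a b with
  | zero => simp [gword]
  | succ n ih => simp [gword, map_mul, ih]

section Amalgam

open Monoid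

variable (Γ : ArtinGraph V) (x : V)

theorem lk_subset_star : Γ.lk x ⊆ Γ.star x := Set.subset_insert _ _

theorem lk_subset_compl : Γ.lk x ⊆ {x}ᶜ := fun u hu h =>
  hu (by rw [Set.mem_singleton_iff] at h; rw [h]; exact Γ.loopless x)

theorem std_mono {S T : Set V} (h : S ⊆ T) : Γ.std S ≤ Γ.std T :=
  Subgroup.closure_mono (Set.image_mono h)

/-- The two "vertex" parabolic subgroups of the amalgam decomposition at `x`. -/
def fam : Bool → Subgroup Γ.ArtinGroup
  | false => Γ.std {x}ᶜ
  | true => Γ.std (Γ.star x)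

/-- The amalgam inclusion maps. -/
def phi : ∀ b : Bool, ↥(Γ.std (Γ.lk x)) →* ↥(Γ.fam x b)
  | false => Subgroup.inclusion
      (show Γ.std (Γ.lk x) ≤ Γ.std {x}ᶜ from Γ.std_mono (Γ.lk_subset_compl x))
  | true => Subgroup.inclusion
      (show Γ.std (Γ.lk x) ≤ Γ.std (Γ.star x) from Γ.std_mono (Γ.lk_subset_star x))

theorem phi_injective : ∀ b, Function.Injective (Γ.phi x b) := by
  intro b
  cases b
  · exact Subgroup.inclusion_injective
      (show Γ.std (Γ.lk x) ≤ Γ.fam x false from Γ.std_mono (Γ.lk_subset_compl x))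
  · exact Subgroup.inclusion_injective
      (show Γ.std (Γ.lk x) ≤ Γ.fam x true from Γ.std_mono (Γ.lk_subset_star x))

/-- The map from the amalgam to the Artin group. -/
noncomputable def toArtin : PushoutI (Γ.phi x) →* Γ.ArtinGroup :=
  PushoutI.lift (fun b => (Γ.fam x b).subtype) (Γ.std (Γ.lk x)).subtype
    (by intro b; cases b <;> rfl)

open scoped Classical in
/-- generator images in the amalgam. -/
noncomputable def psiFun : V → PushoutI (Γ.phi x) := fun v =>
  if h : v = x then
    PushoutI.of (φ := Γ.phi x) true ⟨Γ.gen x, Γ.gen_mem_std (Set.mem_insert x _)⟩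
  else PushoutI.of (φ := Γ.phi x) false ⟨Γ.gen v, Γ.gen_mem_std h⟩

theorem psiFun_rels : ∀ r ∈ Γ.rels, FreeGroup.lift (Γ.psiFun x) r = 1 := by
  classical
  rintro r ⟨u, v, hm, rfl⟩
  have key : ∃ (b : Bool) (a c : ↥(Γ.fam x b)),
      Γ.psiFun x u = PushoutI.of b a ∧ Γ.psiFun x v = PushoutI.of b c ∧
        (a : Γ.ArtinGroup) = Γ.gen u ∧ (c : Γ.ArtinGroup) = Γ.gen v := by
    by_cases hu : u = x
    · subst hu
      have hvlk : v ∈ Γ.lk u := hm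
      have hvx : v ≠ u := by rintro rfl; exact hvlk (Γ.loopless v)
      refine ⟨true, ⟨Γ.gen u, Γ.gen_mem_std (Set.mem_insert u _)⟩,
        ⟨Γ.gen v, Γ.gen_mem_std (Γ.lk_subset_star u hvlk)⟩, by simp [psiFun], ?_, rfl, rfl⟩
      have h1 : Γ.psiFun u v
          = PushoutI.of (φ := Γ.phi u) false (Γ.phi u false ⟨Γ.gen v, Γ.gen_mem_std hvlk⟩) := by
        simp [psiFun, hvx]; rfl
      rw [h1, PushoutI.of_apply_eq_base, ← PushoutI.of_apply_eq_base (Γ.phi u) true]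
      rfl
    · by_cases hv : v = x
      · subst hv
        have hulk : u ∈ Γ.lk v := by
          show Γ.m v u ≠ 0
          rw [Γ.symm]; exact hm
        refine ⟨true, ⟨Γ.gen u, Γ.gen_mem_std (Γ.lk_subset_star v hulk)⟩,
          ⟨Γ.gen v, Γ.gen_mem_std (Set.mem_insert v _)⟩, ?_, by simp [psiFun], rfl, rfl⟩
        have h1 : Γ.psiFun v u
            = PushoutI.of (φ := Γ.phi v) false (Γ.phi v false ⟨Γ.gen u, Γ.gen_mem_std hulk⟩) := by
          simp [psiFun, hu]; rfl
        rw [h1, PushoutI.of_apply_eq_base, ← PushoutI.of_apply_eq_base (Γ.phi v) true]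
        rfl
      · exact ⟨false, ⟨Γ.gen u, Γ.gen_mem_std hu⟩, ⟨Γ.gen v, Γ.gen_mem_std hv⟩,
          by simp [psiFun, hu], by simp [psiFun, hv], rfl, rfl⟩
  obtain ⟨b, a, c, hfu, hfv, ha, hc⟩ := key
  rw [map_mul, map_inv, mul_inv_eq_one, map_word, map_word]
  simp only [FreeGroup.lift_apply_of, hfu, hfv]
  rw [← map_gword, ← map_gword]
  congr 1
  ext
  have h2 := map_gword (Γ.fam x b).subtype a c (Γ.m u v)
  have h3 := map_gword (Γ.fam x b).subtype c a (Γ.m u v)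
  simp only [Subgroup.coe_subtype] at h2 h3
  rw [h2, h3, ha, hc]
  exact Γ.gen_rel hm

/-- The map from the Artin group to the amalgam. -/
noncomputable def toPush : Γ.ArtinGroup →* PushoutI (Γ.phi x) :=
  PresentedGroup.toGroup (Γ.psiFun_rels x)

theorem toPush_gen (v : V) : Γ.toPush x (Γ.gen v) = Γ.psiFun x v :=
  PresentedGroup.toGroup.of _

theorem toArtin_of (b : Bool) (s : ↥(Γ.fam x b)) :
    Γ.toArtin x (PushoutI.of (φ := Γ.phi x) b s) = (s : Γ.ArtinGroup) := by
  simp [toArtin, PushoutI.lift_of]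

theorem toArtin_base (k : ↥(Γ.std (Γ.lk x))) :
    Γ.toArtin x (PushoutI.base (Γ.phi x) k) = (k : Γ.ArtinGroup) := by
  simp [toArtin, PushoutI.lift_base]

theorem toArtin_toPush (z : Γ.ArtinGroup) : Γ.toArtin x (Γ.toPush x z) = z := by
  classical
  have h : (Γ.toArtin x).comp (Γ.toPush x) = MonoidHom.id _ := by
    apply PresentedGroup.ext
    intro v
    show Γ.toArtin x (Γ.toPush x (Γ.gen v)) = Γ.gen v
    rw [toPush_gen]
    by_cases hv : v = x
    · subst hv
      show Γ.toArtin v (Γ.psiFun v v) = _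
      rw [show Γ.psiFun v v = PushoutI.of (φ := Γ.phi v) true
          ⟨Γ.gen v, Γ.gen_mem_std (Set.mem_insert v _)⟩ by simp [psiFun]]
      rw [toArtin_of]
    · rw [show Γ.psiFun x v = PushoutI.of (φ := Γ.phi x) false
          ⟨Γ.gen v, Γ.gen_mem_std hv⟩ by simp [psiFun, hv]]
      rw [toArtin_of]
  exact DFunLike.congr_fun h z

theorem toPush_false {z : Γ.ArtinGroup} (hz : z ∈ Γ.std {x}ᶜ) :
    Γ.toPush x z = PushoutI.of (φ := Γ.phi x) false ⟨z, hz⟩ := by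
  classical
  induction hz using Subgroup.closure_induction with
  | mem g hg =>
    obtain ⟨v, hv, rfl⟩ := hg
    have hvx : v ≠ x := hv
    show Γ.toPush x (Γ.gen v) = _
    rw [toPush_gen]
    simp [psiFun, hvx]
  | one =>
    symm
    exact map_one _
  | mul a b ha hb iha ihb =>
    rw [map_mul, iha, ihb, ← map_mul]
    rfl
  | inv a ha iha =>
    rw [map_inv, iha, ← map_inv]
    rfl

end Amalgam

theorem mem_conjP {G : Type*} [Group G] {g z : G} {H : Subgroup G} :
    z ∈ conjP g H ↔ ∃ w ∈ H, g * w * g⁻¹ = z := by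
  simp [conjP, Subgroup.mem_map, MulAut.conj_apply]

theorem conjP_one {G : Type*} [Group G] (H : Subgroup G) : conjP 1 H = H := by
  ext z
  simp [mem_conjP]

end ArtinGraph

namespace PushKey

open Monoid Monoid.PushoutI Monoid.CoprodI List

variable {ι : Type}  {H : Type*} {Gf : ι → Type*} [Group H] [∀ i, Group (Gf i)]
  (φ : ∀ i, H →* Gf i)

/-- Product of a list of letters in the pushout. -/
def prodL (l : List (Σ i, Gf i)) : PushoutI φ :=
  (l.map fun p => PushoutI.of (φ := φ) p.1 p.2).prod

@[simp] theorem prodL_nil : prodL φ [] = 1 := rfl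

theorem prodL_cons (p : Σ i, Gf i) (l : List (Σ i, Gf i)) :
    prodL φ (p :: l) = PushoutI.of (φ := φ) p.1 p.2 * prodL φ l := by
  simp [prodL]

theorem prodL_concat (l : List (Σ i, Gf i)) (p : Σ i, Gf i) :
    prodL φ (l ++ [p]) = prodL φ l * PushoutI.of (φ := φ) p.1 p.2 := by
  simp [prodL]

/-- Reduced lists of letters. -/
def Lred (l : List (Σ i, Gf i)) : Prop :=
  l.Chain' (fun a b => a.1 ≠ b.1) ∧ ∀ p ∈ l, p.2 ∉ (φ p.1).range

theorem Lred.ne_one {l : List (Σ i, Gf i)} (h : Lred φ l) :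
    ∀ p ∈ l, p.2 ≠ 1 := fun p hp hone =>
  h.2 p hp (hone ▸ one_mem _)

/-- The `CoprodI.Word` of a reduced list. -/
def mkWord (l : List (Σ i, Gf i)) (h : Lred φ l) : CoprodI.Word Gf :=
  ⟨l, fun p hp => h.ne_one φ p hp, h.1⟩

theorem mkWord_reduced (l : List (Σ i, Gf i)) (h : Lred φ l) :
    PushoutI.Reduced φ (mkWord φ l h) := fun p hp => h.2 p hp

theorem ofCoprodI_mkWord_prod (l : List (Σ i, Gf i)) (h : Lred φ l) :
    ofCoprodI (mkWord φ l h).prod = prodL φ l := by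
  rw [CoprodI.Word.prod, map_list_prod, List.map_map]
  show (List.map (⇑ofCoprodI ∘ fun p => CoprodI.of p.snd) l).prod = _
  unfold prodL
  congr 1

/-- Uniqueness of the index sequence of a reduced word. -/
theorem indices_eq (hφ : ∀ i, Function.Injective (φ i))
    {l₁ l₂ : List (Σ i, Gf i)} (h₁ : Lred φ l₁) (h₂ : Lred φ l₂)
    (h : prodL φ l₁ = prodL φ l₂) :
    l₁.map Sigma.fst = l₂.map Sigma.fst := by
  obtain ⟨d⟩ := PushoutI.NormalWord.transversal_nonempty φ hφ
  obtain ⟨w₁, hw₁, hm₁⟩ := (mkWord_reduced φ l₁ h₁).exists_normalWord_prod_eq d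
  obtain ⟨w₂, hw₂, hm₂⟩ := (mkWord_reduced φ l₂ h₂).exists_normalWord_prod_eq d
  rw [ofCoprodI_mkWord_prod] at hw₁ hw₂
  have hm₁' : List.map Sigma.fst w₁.toList = List.map Sigma.fst l₁ := hm₁
  have hm₂' : List.map Sigma.fst w₂.toList = List.map Sigma.fst l₂ := hm₂
  have : w₁ = w₂ := PushoutI.NormalWord.prod_injective (by rw [hw₁, hw₂, h])
  rw [← hm₁', ← hm₂', this]

/-- A nonempty reduced word is not in the base subgroup. -/
theorem not_base (hφ : ∀ i, Function.Injective (φ i))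
    {l : List (Σ i, Gf i)} (h : Lred φ l) (hne : l ≠ []) :
    prodL φ l ∉ (PushoutI.base φ).range := by
  intro hmem
  have := (mkWord_reduced φ l h).eq_empty_of_mem_range hφ
    (by rw [ofCoprodI_mkWord_prod]; exact hmem)
  apply hne
  have := congrArg CoprodI.Word.toList this
  simpa [mkWord, CoprodI.Word.empty] using this

theorem mul_phi_not_range {k : ι} {c : Gf k} (hc : c ∉ (φ k).range) (y : H) :
    c * φ k y ∉ (φ k).range := by
  rintro ⟨z, hz⟩
  exact hc ⟨z * y⁻¹, by rw [map_mul, map_inv, hz]; group⟩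

theorem chain'_of_map_fst_eq {l₁ l₂ : List (Σ i, Gf i)}
    (h : l₁.map Sigma.fst = l₂.map Sigma.fst)
    (hc : l₁.Chain' (fun a b => a.1 ≠ b.1)) : l₂.Chain' (fun a b => a.1 ≠ b.1) := by
  have h1 : (l₁.map Sigma.fst).Chain' (· ≠ ·) := (List.isChain_map Sigma.fst).2 hc
  rw [h] at h1
  exact (List.isChain_map Sigma.fst).1 h1

theorem Lred.concat_mod {l₀ : List (Σ i, Gf i)} {k : ι} {c c' : Gf k}
    (h : Lred φ (l₀ ++ [⟨k, c⟩])) (hc' : c' ∉ (φ k).range) :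
    Lred φ (l₀ ++ [⟨k, c'⟩]) := by
  constructor
  · exact chain'_of_map_fst_eq (l₁ := l₀ ++ [⟨k, c⟩]) (by simp) h.1
  · intro p hp
    rcases List.mem_append.1 hp with hp | hp
    · exact h.2 p (List.mem_append.2 (Or.inl hp))
    · rcases List.mem_singleton.1 hp with rfl
      exact hc'

/-- The core lemma: a reduced word whose first letter is not in `Gf i` cannot
conjugate a non-degenerate `of i a` into a single letter. -/
theorem eqE (hφ : ∀ i, Function.Injective (φ i))
    {l : List (Σ i, Gf i)} (hl : Lred φ l) {i j : ι} {a : Gf i} {b : Gf j}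
    (ha : a ∉ (φ i).range)
    (hhead : ∀ p ∈ l.head?, p.1 ≠ i)
    (heq : PushoutI.of (φ := φ) i a * prodL φ l
      = prodL φ l * PushoutI.of (φ := φ) j b) :
    l = [] := by
  rcases l.eq_nil_or_concat' with rfl | ⟨l₀, ⟨k, c⟩, rfl⟩
  · rfl
  exfalso
  set l : List (Σ i, Gf i) := l₀ ++ [⟨k, c⟩] with hldef
  have hc : c ∉ (φ k).range := hl.2 ⟨k, c⟩ (by simp [hldef])
  have hL : Lred φ (⟨i, a⟩ :: l) := by
    refine ⟨List.IsChain.cons hl.1 ?_, ?_⟩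
    · intro y hy
      exact (hhead y hy).symm
    · intro p hp
      rcases List.mem_cons.1 hp with rfl | hp
      · exact ha
      · exact hl.2 p hp
  have hLprod : prodL φ (⟨i, a⟩ :: l) = prodL φ l * PushoutI.of (φ := φ) j b := by
    rw [prodL_cons]; exact heq
  by_cases hb : b ∈ (φ j).range
  · -- length drop: absorb `b` into the last letter
    obtain ⟨y, rfl⟩ := hb
    have h2 : prodL φ l * PushoutI.of (φ := φ) j (φ j y)
        = prodL φ (l₀ ++ [⟨k, c * φ k y⟩]) := by
      rw [hldef, prodL_concat, prodL_concat, PushoutI.of_apply_eq_base φ j y,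
        ← PushoutI.of_apply_eq_base φ k y, mul_assoc, ← map_mul]
    have h3 := indices_eq φ hφ hL (hl.concat_mod φ (mul_phi_not_range φ hc y))
      (by rw [hLprod, h2])
    have := congrArg List.length h3
    simp [hldef] at this
  · by_cases hkj : k = j
    · subst hkj
      by_cases hcb : c * b ∈ (φ k).range
      · -- the last two letters merge into the base group
        obtain ⟨y, hy⟩ := hcb
        have h2 : prodL φ l * PushoutI.of (φ := φ) k b
            = prodL φ l₀ * PushoutI.base φ y := by
          rw [hldef, prodL_concat, mul_assoc, ← map_mul, ← hy,
            PushoutI.of_apply_eq_base φ k y]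
        rcases l₀.eq_nil_or_concat' with rfl | ⟨l₁, ⟨k₂, c₂⟩, rfl⟩
        · -- whole word is in the base group
          refine not_base φ hφ hL (by simp) ?_
          rw [hLprod, h2]
          simp only [prodL_nil, one_mul]
          exact ⟨y, rfl⟩
        · have hc₂ : c₂ ∉ (φ k₂).range :=
            hl.2 ⟨k₂, c₂⟩ (by simp [hldef])
          have h4 : prodL φ (l₁ ++ [⟨k₂, c₂⟩]) * PushoutI.base φ y
              = prodL φ (l₁ ++ [⟨k₂, c₂ * φ k₂ y⟩]) := by
            rw [prodL_concat φ l₁ ⟨k₂, c₂⟩, prodL_concat φ l₁ ⟨k₂, c₂ * φ k₂ y⟩, mul_assoc,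
              ← PushoutI.of_apply_eq_base φ k₂ y, ← map_mul]
          have hl₀red : Lred φ (l₁ ++ [⟨k₂, c₂ * φ k₂ y⟩]) := by
            refine Lred.concat_mod φ (c := c₂) ?_ (mul_phi_not_range φ hc₂ y)
            constructor
            · have h5 : Chain' (fun a b => a.1 ≠ b.1) (l₁ ++ [⟨k₂, c₂⟩] ++ [⟨k, c⟩]) := hl.1
              exact h5.left_of_append
            · intro p hp
              exact hl.2 p (List.mem_append.2 (Or.inl hp))
          have h3 := indices_eq φ hφ hL hl₀red (by rw [hLprod, h2, h4])
          have := congrArg List.length h3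
          simp [hldef] at this
      · -- merge last two letters into one letter
        have h2 : prodL φ l * PushoutI.of (φ := φ) k b
            = prodL φ (l₀ ++ [⟨k, c * b⟩]) := by
          rw [hldef, prodL_concat, prodL_concat, mul_assoc, ← map_mul]
        have h3 := indices_eq φ hφ hL (hl.concat_mod φ hcb) (by rw [hLprod, h2])
        have := congrArg List.length h3
        simp [hldef] at this
    · -- append the letter; compare first letters
      have h2 : prodL φ l * PushoutI.of (φ := φ) j b = prodL φ (l ++ [⟨j, b⟩]) :=
        (prodL_concat φ l ⟨j, b⟩).symm
      have hlred : Lred φ (l ++ [⟨j, b⟩]) := by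
        constructor
        · refine List.IsChain.append hl.1 (List.isChain_singleton _) ?_
          intro p hp q hq
          have hq' : (⟨j, b⟩ : Σ i, Gf i) = q := by simpa using hq
          have hp' : (⟨k, c⟩ : Σ i, Gf i) = p := by
            have h6 : (l₀ ++ [(⟨k, c⟩ : Σ i, Gf i)]).getLast? = some ⟨k, c⟩ :=
              List.getLast?_concat
            rw [hldef] at hp
            rw [h6] at hp
            simpa using hp
          subst hq'
          rw [← hp']
          exact hkj
        · intro p hp
          rcases List.mem_append.1 hp with hp | hp
          · exact hl.2 p hp
          · rcases List.mem_singleton.1 hp with rfl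
            exact hb
      have h3 := indices_eq φ hφ hL hlred (by rw [hLprod, h2])
      -- first letters: `i = ` first letter of `l`, contradicting `hhead`
      rcases l₀ with _ | ⟨q, l₀'⟩
      · have : i = k := by simpa [hldef] using congrArg List.head? h3
        exact hhead ⟨k, c⟩ (by simp [hldef]) this.symm
      · have : i = q.1 := by simpa [hldef] using congrArg List.head? h3
        exact hhead q (by simp [hldef]) this.symm

/-- The property we prove for all `g` by induction on normal words. -/
def Cprop (i₀ : ι) (g : PushoutI φ) : Prop :=
  g ∈ (PushoutI.of (φ := φ) i₀).range ∨
    ∃ h : PushoutI φ, ∀ z, z ∈ (PushoutI.of (φ := φ) i₀).range →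
      g⁻¹ * z * g ∈ (PushoutI.of (φ := φ) i₀).range →
      h⁻¹ * z * h ∈ (PushoutI.base φ).range

theorem Cprop.mul_left {i₀ : ι} {y g : PushoutI φ}
    (hy : y ∈ (PushoutI.of (φ := φ) i₀).range) (h : Cprop φ i₀ g) :
    Cprop φ i₀ (y * g) := by
  rcases h with hg | ⟨h, hh⟩
  · exact Or.inl (mul_mem hy hg)
  · refine Or.inr ⟨y * h, fun z hz hcon => ?_⟩
    have hz' : y⁻¹ * z * y ∈ (PushoutI.of (φ := φ) i₀).range :=
      mul_mem (mul_mem (inv_mem hy) hz) hy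
    have hcon' : g⁻¹ * (y⁻¹ * z * y) * g ∈ (PushoutI.of (φ := φ) i₀).range := by
      have hrw : g⁻¹ * (y⁻¹ * z * y) * g = (y * g)⁻¹ * z * (y * g) := by group
      rw [hrw]; exact hcon
    have hres := hh _ hz' hcon'
    have hrw2 : (y * h)⁻¹ * z * (y * h) = h⁻¹ * (y⁻¹ * z * y) * h := by group
    rw [hrw2]; exact hres

theorem normalWord_lred {d : PushoutI.NormalWord.Transversal φ}
    (w : PushoutI.NormalWord d) : Lred φ w.toList := by
  refine ⟨w.chain_ne, fun p hp hrange => ?_⟩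
  have hset : p.2 ∈ d.set p.1 := w.normalized p.1 p.2 hp
  have hne : p.2 ≠ 1 := w.ne_one p hp
  have h1 : ((((d.compl p.1).equiv p.2).snd : Gf p.1)) = p.2 :=
    ((d.compl p.1).equiv_snd_eq_self_iff_mem (one_mem _)).2 hset
  have h2 : ((((d.compl p.1).equiv p.2).snd : Gf p.1)) = 1 :=
    ((d.compl p.1).coe_equiv_snd_eq_one_iff_mem (d.one_mem _)).2 hrange
  exact hne (h1.symm.trans h2)

theorem normalWord_prod_eq {d : PushoutI.NormalWord.Transversal φ}
    (w : PushoutI.NormalWord d) (hw : w.head = 1) :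
    w.prod = prodL φ w.toList := by
  rw [PushoutI.NormalWord.prod, hw, map_one, one_mul]
  exact ofCoprodI_mkWord_prod φ w.toList (normalWord_lred φ w)

theorem key (hφ : ∀ i, Function.Injective (φ i)) (i₀ : ι) (g : PushoutI φ) :
    Cprop φ i₀ g := by
  classical
  obtain ⟨d⟩ := PushoutI.NormalWord.transversal_nonempty φ hφ
  suffices H : ∀ w : PushoutI.NormalWord d, Cprop φ i₀ w.prod by
    have h1 := H (PushoutI.NormalWord.equiv g)
    have h2 : (PushoutI.NormalWord.equiv (φ := φ) (d := d) g).prod = g :=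
      PushoutI.NormalWord.equiv.left_inv g
    rwa [h2] at h1
  intro w
  induction w using PushoutI.NormalWord.consRecOn with
  | empty => exact Or.inl (by rw [PushoutI.NormalWord.prod_empty]; exact one_mem _)
  | base h w hw1 ih =>
    rw [PushoutI.NormalWord.prod_smul]
    exact Cprop.mul_left φ ⟨φ i₀ h, (PushoutI.of_apply_eq_base φ i₀ h)⟩ ih
  | cons i gi w hmw hgn hgr hw1 ih =>
    rw [PushoutI.NormalWord.prod_cons]
    by_cases hii : i = i₀
    · subst hii
      exact Cprop.mul_left φ ⟨gi, rfl⟩ ih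
    · refine Or.inr ⟨1, fun z hz hcon => ?_⟩
      obtain ⟨a, rfl⟩ := hz
      obtain ⟨b, hb⟩ := hcon
      by_cases har : a ∈ (φ i₀).range
      · obtain ⟨y, rfl⟩ := har
        rw [PushoutI.of_apply_eq_base φ i₀ y]
        simpa using ⟨y, rfl⟩
      · exfalso
        set g := PushoutI.of (φ := φ) i gi * w.prod with hg
        have heq : PushoutI.of (φ := φ) i₀ a * g = g * PushoutI.of (φ := φ) i₀ b := by
          rw [hb]; group
        have hgl : g = prodL φ (⟨i, gi⟩ :: w.toList) := by
          rw [hg, prodL_cons, normalWord_prod_eq φ w hw1]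
        have hlred : Lred φ (⟨i, gi⟩ :: w.toList) := by
          refine ⟨List.IsChain.cons (normalWord_lred φ w).1 ?_, ?_⟩
          · exact CoprodI.Word.fstIdx_ne_iff.mp hmw
          · intro p hp
            rcases List.mem_cons.1 hp with rfl | hp
            · exact hgr
            · exact (normalWord_lred φ w).2 p hp
        have hhead : ∀ p ∈ (⟨i, gi⟩ :: w.toList : List (Σ i, Gf i)).head?, p.1 ≠ i₀ := by
          intro p hp
          have hpe : p = ⟨i, gi⟩ := by
            simp only [List.head?_cons, Option.mem_def, Option.some.injEq] at hp
            exact hp.symm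
          rw [hpe]
          exact hii
        have := eqE φ hφ hlred har hhead (by rw [← hgl]; exact heq)
        simp at this

end PushKey

open Monoid

open ArtinGraph in
/-- if `G_A ∪ gG_Ag⁻¹` is not contained in any proper parabolic
subgroup and some `x ∈ V \ A` has `A ⊄ lk(x)`, then `G_A ∩ gG_Ag⁻¹` lies in a
parabolic subgroup over a proper subset of `A`. -/
theorem stmt7 {V : Type} (Γ : ArtinGraph V) (hEven : Γ.IsEven) (A : Set V)
    (g : Γ.ArtinGroup)
    (hproper : ¬ ∃ (S : Set V) (t : Γ.ArtinGroup), S ≠ Set.univ ∧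
        Γ.std A ≤ conjP t (Γ.std S) ∧ conjP g (Γ.std A) ≤ conjP t (Γ.std S))
    (hx : ∃ x ∈ Set.univ \ A, ¬ A ⊆ Γ.lk x) :
    ∃ B : Set V, B ⊂ A ∧ ∃ d : Γ.ArtinGroup,
      Γ.std A ⊓ conjP g (Γ.std A) ≤ conjP d (Γ.std B) := by
  classical
  obtain ⟨x, hxmem, hnsub⟩ := hx
  have hxA : x ∉ A := hxmem.2
  have hAcompl : Γ.std A ≤ Γ.std {x}ᶜ := by
    apply Γ.std_mono
    intro a ha h
    rw [Set.mem_singleton_iff] at h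
    subst h
    exact hxA ha
  have hkey := PushKey.key (Γ.phi x) (Γ.phi_injective x) false (Γ.toPush x g)
  rcases hkey with hgM | ⟨h', hh⟩
  · -- `g` lies in `std {x}ᶜ`, contradicting `hproper`
    exfalso
    apply hproper
    obtain ⟨m, hm⟩ := hgM
    have hgmem : g ∈ Γ.std {x}ᶜ := by
      have h1 := congrArg (Γ.toArtin x) hm
      rw [toArtin_toPush, toArtin_of] at h1
      rw [← h1]
      exact m.prop
    refine ⟨{x}ᶜ, 1, ?_, ?_, ?_⟩
    · intro hS
      have : x ∈ ({x}ᶜ : Set V) := hS ▸ Set.mem_univ x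
      exact this rfl
    · rw [conjP_one]
      exact hAcompl
    · rw [conjP_one]
      intro z hz
      obtain ⟨w, hw, hwz⟩ := mem_conjP.1 hz
      rw [← hwz]
      exact mul_mem (mul_mem hgmem (hAcompl hw)) (inv_mem hgmem)
  · -- main case: the intersection is conjugate into `std (A ∩ lk x)`
    have hAne : ∃ a ∈ A, a ∉ Γ.lk x := Set.not_subset.1 hnsub
    obtain ⟨a, haA, halk⟩ := hAne
    refine ⟨A ∩ Γ.lk x, ?_, Γ.retr hEven A (Γ.toArtin x h'), ?_⟩
    · refine lt_of_le_of_ne Set.inter_subset_left ?_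
      intro hEq
      have : a ∈ A ∩ Γ.lk x := by rw [hEq]; exact haA
      exact halk this.2
    · intro z hz
      obtain ⟨hz1, hz2⟩ := hz
      obtain ⟨w, hw, hwz⟩ := mem_conjP.1 hz2
      have hzM : Γ.toPush x z ∈ (PushoutI.of (φ := Γ.phi x) false).range :=
        ⟨⟨z, hAcompl hz1⟩, (Γ.toPush_false x (hAcompl hz1)).symm⟩
      have hzg : g⁻¹ * z * g = w := by
        rw [← hwz]; group
      have hcon : (Γ.toPush x g)⁻¹ * Γ.toPush x z * Γ.toPush x g
          ∈ (PushoutI.of (φ := Γ.phi x) false).range := by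
        rw [← map_inv, ← map_mul, ← map_mul, hzg]
        exact ⟨⟨w, hAcompl hw⟩, (Γ.toPush_false x (hAcompl hw)).symm⟩
      obtain ⟨k, hk⟩ := hh (Γ.toPush x z) hzM hcon
      have hzval : z = Γ.toArtin x h' * (k : Γ.ArtinGroup) * (Γ.toArtin x h')⁻¹ := by
        have h1 := congrArg (Γ.toArtin x) hk
        rw [toArtin_base, map_mul, map_mul, map_inv, toArtin_toPush] at h1
        rw [h1]
        group
      have hzA : Γ.retr hEven A z = z := Γ.retr_fix hEven A hz1
      have hkA : Γ.retr hEven A (k : Γ.ArtinGroup) ∈ Γ.std (A ∩ Γ.lk x) :=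
        Γ.retr_std_le hEven A (Γ.lk x) k.prop
      refine mem_conjP.2 ⟨Γ.retr hEven A (k : Γ.ArtinGroup), hkA, ?_⟩
      conv_rhs => rw [← hzA, hzval]
      rw [map_mul, map_mul, map_inv]
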